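/- Let r > 0 and define F : ℝ³ → ℝ by F(t₁,t₂,t₃) = (1/2)t₁²t₃ + (1/2)t₁t₂² − (1/24)t₂⁴ + t₂·exp(t₃). With κ = 1, the matrix η_{αβ} = ∂³F/∂t₁∂t_α∂t_β is the constant matrix with η₁₃ = η₃₁ = 1, η₂₂ = 1 and all other entries 0, and the function G(t₁,t₂,t₃) = −(1/24)t₃ satisfies Getzler's system for F on ℝ³. Moreover ∂G/∂t₁ = 0 and E(G) = −1/16 for the Euler vector field E = t₁∂/∂t₁ + (1/2)t₂∂/∂t₂ + (3/2)∂/∂t₃. -/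

import Mathlib

open Real

/-- Partial derivative of a function of `n` real variables in the `i`-th coordinate
direction. -/
noncomputable def pd {n : ℕ} (i : Fin n) (f : (Fin n → ℝ) → ℝ) : (Fin n → ℝ) → ℝ :=
  fun t => fderiv ℝ f t (Pi.single i 1)

/-- The quantity `Σ_{α₁α₂α₃α₄} z_{α₁}z_{α₂}z_{α₃}z_{α₄} Δ_{α₁α₂α₃α₄}` of Getzler's system,
for a prepotential `F`, a candidate `G`-function `G`, and the (constant) inverse metric
`ηinv`, evaluated at the point `t` and covector `z`. -/
noncomputable def getzlerLHS {n : ℕ} (F G : (Fin n → ℝ) → ℝ)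
    (ηinv : Matrix (Fin n) (Fin n) ℝ) (t z : Fin n → ℝ) : ℝ :=
  let c3 : Fin n → Fin n → Fin n → ℝ :=
    fun μ α β => ∑ ν, ηinv μ ν * pd ν (pd α (pd β F)) t
  let c4 : Fin n → Fin n → Fin n → Fin n → ℝ :=
    fun μ α β γ => ∑ ν, ηinv μ ν * pd ν (pd α (pd β (pd γ F))) t
  let c5 : Fin n → Fin n → Fin n → Fin n → Fin n → ℝ :=
    fun μ α β γ δ => ∑ ν, ηinv μ ν * pd ν (pd α (pd β (pd γ (pd δ F)))) t
  ∑ a1, ∑ a2, ∑ a3, ∑ a4, z a1 * z a2 * z a3 * z a4 *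
    (∑ μ, ∑ ν,
      (3 * c3 μ a1 a2 * c3 ν a3 a4 * pd μ (pd ν G) t
        - 4 * c3 μ a1 a2 * c3 ν a3 μ * pd a4 (pd ν G) t
        - c3 μ a1 a2 * c4 ν a3 a4 μ * pd ν G t
        + 2 * c4 μ a1 a2 a3 * c3 ν a4 μ * pd ν G t
        + (1 / 6) * c4 μ a1 a2 a3 * c4 ν a4 μ ν
        + (1 / 24) * c5 μ a1 a2 a3 a4 * c3 ν μ ν
        - (1 / 4) * c4 μ a1 a2 ν * c4 ν a3 a4 μ))

/-- The prepotential of the Frobenius manifold `ℂ³/W̃⁽¹⁾(A₂)`: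
`F = ½t₁²t₃ + ½t₁t₂² − (1/24)t₂⁴ + t₂ e^{t₃}`. -/
noncomputable def Fa2 : (Fin 3 → ℝ) → ℝ :=
  fun t => (1/2) * (t 0)^2 * t 2 + (1/2) * t 0 * (t 1)^2 - (1/24) * (t 1)^4
    + t 1 * Real.exp (t 2)

/-- The matrix `η` with `η₁₃ = η₃₁ = η₂₂ = 1` and all other entries `0`
(it is its own inverse). -/
def ηA2 : Matrix (Fin 3) (Fin 3) ℝ := !![0, 0, 1; 0, 1, 0; 1, 0, 0]

lemma pd_of_hasFDerivAt {n : ℕ} {f : (Fin n → ℝ) → ℝ} {L : (Fin n → ℝ) →L[ℝ] ℝ} {t}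
    (h : HasFDerivAt f L t) (i : Fin n) : pd i f t = L (Pi.single i 1) := by
  rw [pd, h.fderiv]

lemma hasF_coord {n : ℕ} (k : Fin n) (t : Fin n → ℝ) :
    HasFDerivAt (fun t : Fin n → ℝ => t k)
      (ContinuousLinearMap.proj (R := ℝ) (φ := fun _ : Fin n => ℝ) k) t :=
  hasFDerivAt_apply k t

-- first derivatives
lemma pdF0 : pd 0 Fa2 = fun t => t 0 * t 2 + (1/2) * (t 1 * t 1) := by
  have hF : Fa2 = fun t => (1/2) * (t 0 * t 0) * t 2 + (1/2) * t 0 * (t 1 * t 1)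
      - (1/24) * ((t 1 * t 1) * (t 1 * t 1)) + t 1 * Real.exp (t 2) := by
    funext t; simp only [Fa2]; ring
  funext t
  erw [hF, pd_of_hasFDerivAt (((((((hasF_coord 0 t).mul (hasF_coord 0 t)).const_mul
    ((1:ℝ)/2)).mul (hasF_coord 2 t)).add (((hasF_coord 0 t).const_mul ((1:ℝ)/2)).mul
    ((hasF_coord 1 t).mul (hasF_coord 1 t)))).sub
    ((((hasF_coord 1 t).mul (hasF_coord 1 t)).mul
      ((hasF_coord 1 t).mul (hasF_coord 1 t))).const_mul ((1:ℝ)/24))).add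
    ((hasF_coord 1 t).mul ((hasF_coord 2 t).exp))) 0]
  simp [Pi.single_apply]
  try ring

lemma pdF1 : pd 1 Fa2 = fun t => t 0 * t 1 - (1/6) * (t 1 * t 1 * t 1) + Real.exp (t 2) := by
  have hF : Fa2 = fun t => (1/2) * (t 0 * t 0) * t 2 + (1/2) * t 0 * (t 1 * t 1)
      - (1/24) * ((t 1 * t 1) * (t 1 * t 1)) + t 1 * Real.exp (t 2) := by
    funext t; simp only [Fa2]; ring
  funext t
  erw [hF, pd_of_hasFDerivAt (((((((hasF_coord 0 t).mul (hasF_coord 0 t)).const_mul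
    ((1:ℝ)/2)).mul (hasF_coord 2 t)).add (((hasF_coord 0 t).const_mul ((1:ℝ)/2)).mul
    ((hasF_coord 1 t).mul (hasF_coord 1 t)))).sub
    ((((hasF_coord 1 t).mul (hasF_coord 1 t)).mul
      ((hasF_coord 1 t).mul (hasF_coord 1 t))).const_mul ((1:ℝ)/24))).add
    ((hasF_coord 1 t).mul ((hasF_coord 2 t).exp))) 1]
  simp [Pi.single_apply]
  try ring

lemma pdF2 : pd 2 Fa2 = fun t => (1/2) * (t 0 * t 0) + t 1 * Real.exp (t 2) := by
  have hF : Fa2 = fun t => (1/2) * (t 0 * t 0) * t 2 + (1/2) * t 0 * (t 1 * t 1)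
      - (1/24) * ((t 1 * t 1) * (t 1 * t 1)) + t 1 * Real.exp (t 2) := by
    funext t; simp only [Fa2]; ring
  funext t
  erw [hF, pd_of_hasFDerivAt (((((((hasF_coord 0 t).mul (hasF_coord 0 t)).const_mul
    ((1:ℝ)/2)).mul (hasF_coord 2 t)).add (((hasF_coord 0 t).const_mul ((1:ℝ)/2)).mul
    ((hasF_coord 1 t).mul (hasF_coord 1 t)))).sub
    ((((hasF_coord 1 t).mul (hasF_coord 1 t)).mul
      ((hasF_coord 1 t).mul (hasF_coord 1 t))).const_mul ((1:ℝ)/24))).add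
    ((hasF_coord 1 t).mul ((hasF_coord 2 t).exp))) 2]
  simp [Pi.single_apply]
  try ring

-- second derivatives
lemma pdF00 (i : Fin 3) : pd i (fun t => t 0 * t 2 + (1/2) * (t 1 * t 1))
    = fun t => ![t 2, t 1, t 0] i := by
  funext t
  erw [pd_of_hasFDerivAt (((hasF_coord 0 t).mul (hasF_coord 2 t)).add
    (((hasF_coord 1 t).mul (hasF_coord 1 t)).const_mul ((1:ℝ)/2))) i]
  fin_cases i <;> simp [Pi.single_apply] <;> try ring

lemma pdF01 (i : Fin 3) : pd i (fun t => t 0 * t 1 - (1/6) * (t 1 * t 1 * t 1) + Real.exp (t 2))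
    = fun t => ![t 1, t 0 - (1/2) * (t 1 * t 1), Real.exp (t 2)] i := by
  funext t
  erw [pd_of_hasFDerivAt ((((hasF_coord 0 t).mul (hasF_coord 1 t)).sub
    ((((hasF_coord 1 t).mul (hasF_coord 1 t)).mul (hasF_coord 1 t)).const_mul ((1:ℝ)/6))).add
    ((hasF_coord 2 t).exp)) i]
  fin_cases i <;> simp [Pi.single_apply] <;> try ring

lemma pdF02 (i : Fin 3) : pd i (fun t => (1/2) * (t 0 * t 0) + t 1 * Real.exp (t 2))
    = fun t => ![t 0, Real.exp (t 2), t 1 * Real.exp (t 2)] i := by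
  funext t
  erw [pd_of_hasFDerivAt ((((hasF_coord 0 t).mul (hasF_coord 0 t)).const_mul ((1:ℝ)/2)).add
    ((hasF_coord 1 t).mul ((hasF_coord 2 t).exp))) i]
  fin_cases i <;> simp [Pi.single_apply] <;> try ring

-- third-level building blocks
lemma pd_coord (i k : Fin 3) : pd i (fun t : Fin 3 → ℝ => t k)
    = fun _ => if k = i then (1:ℝ) else 0 := by
  funext t
  rw [pd_of_hasFDerivAt (hasF_coord k t) i]
  simp [Pi.single_apply]

lemma pd_q (i : Fin 3) : pd i (fun t : Fin 3 → ℝ => t 0 - (1/2) * (t 1 * t 1))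
    = fun t => ![(1:ℝ), -t 1, 0] i := by
  funext t
  erw [pd_of_hasFDerivAt ((hasF_coord 0 t).sub
    (((hasF_coord 1 t).mul (hasF_coord 1 t)).const_mul ((1:ℝ)/2))) i]
  fin_cases i <;> simp [Pi.single_apply] <;> try ring

lemma pd_neg1 (i : Fin 3) : pd i (fun t : Fin 3 → ℝ => -t 1)
    = fun _ => ![(0:ℝ), -1, 0] i := by
  funext t
  erw [pd_of_hasFDerivAt (hasF_coord 1 t).neg i]
  fin_cases i <;> simp [Pi.single_apply]

lemma pd_ex (i : Fin 3) : pd i (fun t : Fin 3 → ℝ => Real.exp (t 2))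
    = fun t => ![(0:ℝ), 0, Real.exp (t 2)] i := by
  funext t
  rw [pd_of_hasFDerivAt (hasF_coord 2 t).exp i]
  fin_cases i <;> simp [Pi.single_apply]

lemma pd_xe (i : Fin 3) : pd i (fun t : Fin 3 → ℝ => t 1 * Real.exp (t 2))
    = fun t => ![(0:ℝ), Real.exp (t 2), t 1 * Real.exp (t 2)] i := by
  funext t
  erw [pd_of_hasFDerivAt ((hasF_coord 1 t).mul ((hasF_coord 2 t).exp)) i]
  fin_cases i <;> simp [Pi.single_apply] <;> try ring

lemma pd_const (i : Fin 3) (c : ℝ) : pd i (fun _ : Fin 3 → ℝ => c) = fun _ => (0:ℝ) := by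
  funext t
  rw [pd_of_hasFDerivAt (hasFDerivAt_const c t) i]
  simp

lemma pd_G (i : Fin 3) : pd i (fun t : Fin 3 → ℝ => -(1/24) * t 2)
    = fun _ => ![(0:ℝ), 0, -(1/24)] i := by
  funext t
  rw [pd_of_hasFDerivAt ((hasF_coord 2 t).const_mul (-(1/24):ℝ)) i]
  fin_cases i <;> simp [Pi.single_apply]

lemma fin3_mk0 (h : 0 < 3) : (⟨0, h⟩ : Fin 3) = 0 := rfl
lemma fin3_mk1 (h : 1 < 3) : (⟨1, h⟩ : Fin 3) = 1 := rfl
lemma fin3_mk2 (h : 2 < 3) : (⟨2, h⟩ : Fin 3) = 2 := rfl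

lemma c3eq (t : Fin 3 → ℝ) (μ α β : Fin 3) :
    (∑ ν, ηA2 μ ν * pd ν (pd α (pd β Fa2)) t) =
    ![ !![1, 0, 0; 0, 0, Real.exp (t 2); 0, Real.exp (t 2), t 1 * Real.exp (t 2)],
       !![0, 1, 0; 1, -t 1, 0; 0, 0, Real.exp (t 2)],
       !![0, 0, 1; 0, 1, 0; 1, 0, 0] ] μ α β := by
  fin_cases μ <;> fin_cases α <;> fin_cases β <;>
    simp only [fin3_mk0, fin3_mk1, fin3_mk2, pdF0, pdF1, pdF2, pdF00, pdF01, pdF02,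
      pd_coord, pd_q, pd_neg1, pd_ex,
      pd_xe, pd_const, pd_G, Matrix.cons_val_zero, Matrix.cons_val_one, Matrix.head_cons,
      Matrix.cons_val_two, Matrix.tail_cons, Matrix.cons_val', Matrix.of_apply,
      Matrix.empty_val', Matrix.cons_val_fin_one, Matrix.head_fin_const, Matrix.zero_apply,
      ηA2, Fin.sum_univ_three, reduceIte, Fin.isValue, zero_mul, one_mul, mul_zero,
      mul_one, add_zero, zero_add, neg_zero, mul_neg, sub_zero, zero_sub] <;> norm_num <;> decide

set_option maxHeartbeats 1000000 in
lemma c4eq (t : Fin 3 → ℝ) (μ α β γ : Fin 3) :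
    (∑ ν, ηA2 μ ν * pd ν (pd α (pd β (pd γ Fa2))) t) =
    ![ ![ !![0,0,0;0,0,0;0,0,0],
          !![0,0,0;0,0,0;0,0,Real.exp (t 2)],
          !![0,0,0;0,0,Real.exp (t 2);0,Real.exp (t 2),t 1 * Real.exp (t 2)] ],
       ![ !![0,0,0;0,0,0;0,0,0],
          !![0,0,0;0,-1,0;0,0,0],
          !![0,0,0;0,0,0;0,0,Real.exp (t 2)] ],
       ![ !![0,0,0;0,0,0;0,0,0],
          !![0,0,0;0,0,0;0,0,0],
          !![0,0,0;0,0,0;0,0,0] ] ] μ α β γ := by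
  fin_cases μ <;> fin_cases α <;> fin_cases β <;> fin_cases γ <;>
    simp only [fin3_mk0, fin3_mk1, fin3_mk2, pdF0, pdF1, pdF2, pdF00, pdF01, pdF02,
      pd_coord, pd_q, pd_neg1, pd_ex,
      pd_xe, pd_const, pd_G, Matrix.cons_val_zero, Matrix.cons_val_one, Matrix.head_cons,
      Matrix.cons_val_two, Matrix.tail_cons, Matrix.cons_val', Matrix.of_apply,
      Matrix.empty_val', Matrix.cons_val_fin_one, Matrix.head_fin_const, Matrix.zero_apply,
      ηA2, Fin.sum_univ_three, reduceIte, Fin.isValue, zero_mul, one_mul, mul_zero,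
      mul_one, add_zero, zero_add, neg_zero, mul_neg, sub_zero, zero_sub] <;> norm_num <;> decide

set_option maxHeartbeats 2000000 in
lemma c5eq (t : Fin 3 → ℝ) (μ α β γ δ : Fin 3) :
    (∑ ν, ηA2 μ ν * pd ν (pd α (pd β (pd γ (pd δ Fa2)))) t) =
    ![ ![ ![ !![0,0,0;0,0,0;0,0,0], !![0,0,0;0,0,0;0,0,0], !![0,0,0;0,0,0;0,0,0] ],
          ![ !![0,0,0;0,0,0;0,0,0], !![0,0,0;0,0,0;0,0,0],
             !![0,0,0;0,0,0;0,0,Real.exp (t 2)] ],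
          ![ !![0,0,0;0,0,0;0,0,0], !![0,0,0;0,0,0;0,0,Real.exp (t 2)],
             !![0,0,0;0,0,Real.exp (t 2);0,Real.exp (t 2),t 1 * Real.exp (t 2)] ] ],
       ![ ![ !![0,0,0;0,0,0;0,0,0], !![0,0,0;0,0,0;0,0,0], !![0,0,0;0,0,0;0,0,0] ],
          ![ !![0,0,0;0,0,0;0,0,0], !![0,0,0;0,0,0;0,0,0], !![0,0,0;0,0,0;0,0,0] ],
          ![ !![0,0,0;0,0,0;0,0,0], !![0,0,0;0,0,0;0,0,0],
             !![0,0,0;0,0,0;0,0,Real.exp (t 2)] ] ],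
       ![ ![ !![0,0,0;0,0,0;0,0,0], !![0,0,0;0,0,0;0,0,0], !![0,0,0;0,0,0;0,0,0] ],
          ![ !![0,0,0;0,0,0;0,0,0], !![0,0,0;0,0,0;0,0,0], !![0,0,0;0,0,0;0,0,0] ],
          ![ !![0,0,0;0,0,0;0,0,0], !![0,0,0;0,0,0;0,0,0], !![0,0,0;0,0,0;0,0,0] ] ] ]
      μ α β γ δ := by
  fin_cases μ <;> fin_cases α <;> fin_cases β <;> fin_cases γ <;> fin_cases δ <;>
    simp only [fin3_mk0, fin3_mk1, fin3_mk2, pdF0, pdF1, pdF2, pdF00, pdF01, pdF02,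
      pd_coord, pd_q, pd_neg1, pd_ex,
      pd_xe, pd_const, pd_G, Matrix.cons_val_zero, Matrix.cons_val_one, Matrix.head_cons,
      Matrix.cons_val_two, Matrix.tail_cons, Matrix.cons_val', Matrix.of_apply,
      Matrix.empty_val', Matrix.cons_val_fin_one, Matrix.head_fin_const, Matrix.zero_apply,
      ηA2, Fin.sum_univ_three, reduceIte, Fin.isValue, zero_mul, one_mul, mul_zero,
      mul_one, add_zero, zero_add, neg_zero, mul_neg, sub_zero, zero_sub] <;> norm_num <;> decide

/-- The `G`-function `G = −t₃/24` of the Frobenius manifold `ℂ³/W̃⁽¹⁾(A₂)`: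
the matrix `η_{αβ} = ∂³F/∂t₁∂t_α∂t_β` is the constant matrix `ηA2`, `G` satisfies
Getzler's system for `F` on `ℝ³`, `∂G/∂t₁ = 0`, and `E(G) = −1/16` for the Euler
vector field `E = t₁∂₁ + ½t₂∂₂ + (3/2)∂₃`. -/
theorem G_function_tildeW1_A2 (r : ℝ) (hr : 0 < r)
    (G : (Fin 3 → ℝ) → ℝ) (hG : G = fun t => -(1/24) * t 2) :
    (∀ t : Fin 3 → ℝ, ∀ α β : Fin 3, pd 0 (pd α (pd β Fa2)) t = ηA2 α β) ∧
    (∀ t z : Fin 3 → ℝ, getzlerLHS Fa2 G ηA2 t z = 0) ∧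
    (∀ t : Fin 3 → ℝ, pd 0 G t = 0) ∧
    (∀ t : Fin 3 → ℝ,
      t 0 * pd 0 G t + (1/2) * t 1 * pd 1 G t + (3/2) * pd 2 G t = -(1/16)) := by
  subst hG
  refine ⟨?_, ?_, ?_, ?_⟩
  · intro t α β
    fin_cases α <;> fin_cases β <;>
      simp only [fin3_mk0, fin3_mk1, fin3_mk2, pdF0, pdF1, pdF2, pdF00, pdF01, pdF02,
      pd_coord, pd_q, pd_neg1, pd_ex,
      pd_xe, pd_const, pd_G, Matrix.cons_val_zero, Matrix.cons_val_one, Matrix.head_cons,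
      Matrix.cons_val_two, Matrix.tail_cons, Matrix.cons_val', Matrix.of_apply,
      Matrix.empty_val', Matrix.cons_val_fin_one, Matrix.head_fin_const, Matrix.zero_apply,
      ηA2, Fin.sum_univ_three, reduceIte, Fin.isValue, zero_mul, one_mul, mul_zero,
      mul_one, add_zero, zero_add, neg_zero, mul_neg, sub_zero, zero_sub] <;> norm_num <;> decide
  · intro t z
    simp only [getzlerLHS]
    simp only [c3eq, c4eq, c5eq, pd_G, pd_const]
    simp only [fin3_mk0, fin3_mk1, fin3_mk2, pdF0, pdF1, pdF2, pdF00, pdF01, pdF02,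
      pd_coord, pd_q, pd_neg1, pd_ex,
      pd_xe, pd_const, pd_G, Matrix.cons_val_zero, Matrix.cons_val_one, Matrix.head_cons,
      Matrix.cons_val_two, Matrix.tail_cons, Matrix.cons_val', Matrix.of_apply,
      Matrix.empty_val', Matrix.cons_val_fin_one, Matrix.head_fin_const, Matrix.zero_apply,
      ηA2, Fin.sum_univ_three, reduceIte, Fin.isValue, zero_mul, one_mul, mul_zero,
      mul_one, add_zero, zero_add, neg_zero, mul_neg, sub_zero, zero_sub]
    ring
  · intro t
    simp only [pd_G, Matrix.cons_val_zero]
  · intro t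
    simp only [pd_G, fin3_mk0, fin3_mk1, fin3_mk2, pdF0, pdF1, pdF2, pdF00, pdF01, pdF02,
      pd_coord, pd_q, pd_neg1, pd_ex,
      pd_xe, pd_const, pd_G, Matrix.cons_val_zero, Matrix.cons_val_one, Matrix.head_cons,
      Matrix.cons_val_two, Matrix.tail_cons, Matrix.cons_val', Matrix.of_apply,
      Matrix.empty_val', Matrix.cons_val_fin_one, Matrix.head_fin_const, Matrix.zero_apply,
      ηA2, Fin.sum_univ_three, reduceIte, Fin.isValue, zero_mul, one_mul, mul_zero,
      mul_one, add_zero, zero_add, neg_zero, mul_neg, sub_zero, zero_sub]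
    norm_num
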